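/- Let N ≥ 1 be an integer, ν > 0 real, τ ∈ (0,1), and let 0 ≤ k ≤ N−1 be an integer. Then for every z ∈ ℂ, |𝓘_k(z)| ≤ e^{τ√ν·(|z| + Re z)}. More precisely, |𝓘_k(z)| ≤ e^{τ√ν·(|z|+Re z)}·𝓘_k(−|z|) and 𝓘_k(−|z|) ≤ 1. -/

import Mathlib

open Finset Filter

noncomputable def binc (α : ℝ) (m : ℕ) : ℝ :=
  Real.Gamma (m + α) / (m.factorial * Real.Gamma α)

lemma binc_nonneg {α : ℝ} (hα : 0 < α) (m : ℕ) : 0 ≤ binc α m := by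
  have h1 : 0 < Real.Gamma ((m:ℝ) + α) := Real.Gamma_pos_of_pos (by positivity)
  have h2 : 0 < Real.Gamma α := Real.Gamma_pos_of_pos hα
  have h3 : (0:ℝ) < m.factorial := by exact_mod_cast m.factorial_pos
  exact le_of_lt (div_pos h1 (by positivity))

lemma binc_zero {α : ℝ} (hα : 0 < α) : binc α 0 = 1 := by
  have h2 : Real.Gamma α ≠ 0 := (Real.Gamma_pos_of_pos hα).ne'
  simp [binc, h2]

lemma binc_succ {α : ℝ} (hα : 0 < α) (m : ℕ) :
    ((m:ℝ)+1) * binc α (m+1) = ((m:ℝ) + α) * binc α m := by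
  have h2 : Real.Gamma α ≠ 0 := (Real.Gamma_pos_of_pos hα).ne'
  have hne : ((m:ℝ) + α) ≠ 0 := by positivity
  have hG : Real.Gamma (((m:ℝ) + 1) + α) = ((m:ℝ)+α) * Real.Gamma ((m:ℝ) + α) := by
    rw [show ((m:ℝ) + 1 + α) = ((m:ℝ) + α) + 1 by ring, Real.Gamma_add_one hne]
  unfold binc
  rw [Nat.factorial_succ]
  push_cast
  rw [hG]
  have hf : ((m.factorial : ℝ)) ≠ 0 := by exact_mod_cast m.factorial_pos.ne'
  field_simp

lemma binom_partial_le {α : ℝ} (hα : 0 < α) (M : ℕ) {s : ℝ} (h0 : 0 ≤ s) (h1 : s < 1) :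
    (1-s) ^ α * ∑ m ∈ range M, binc α m * s ^ m ≤ 1 := by
  rcases Nat.eq_zero_or_pos M with hM | hM
  · simp [hM]
  obtain ⟨n, rfl⟩ : ∃ n, M = n + 1 := ⟨M-1, by omega⟩
  set P : ℝ → ℝ := fun x => ∑ m ∈ range (n+1), binc α m * x ^ m with hP
  set D : ℝ → ℝ := fun x => ∑ m ∈ range (n+1), binc α m * ((m:ℝ) * x ^ (m-1)) with hD
  set G : ℝ → ℝ := fun x => (-1) * α * (1-x) ^ (α-1) * P x + (1-x) ^ α * D x with hG
  set g : ℝ → ℝ := fun x => (1-x) ^ α * P x with hg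
  have hder : ∀ x ∈ Set.Icc (0:ℝ) s, HasDerivAt g (G x) x := by
    intro x hx
    have hx1 : (1:ℝ) - x ≠ 0 := by
      have := hx.2; have : x < 1 := lt_of_le_of_lt hx.2 h1; nlinarith
    have hb : HasDerivAt (fun x : ℝ => 1 - x) (-1) x := (hasDerivAt_id x).const_sub 1
    have hr : HasDerivAt (fun x : ℝ => (1-x) ^ α) ((-1) * α * (1-x) ^ (α-1)) x :=
      hb.rpow_const (Or.inl hx1)
    have hp : HasDerivAt P (D x) x := by
      apply HasDerivAt.fun_sum
      intro m _
      exact (hasDerivAt_pow m x).const_mul (binc α m)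
    exact hr.mul hp
  have hmono : AntitoneOn g (Set.Icc 0 s) := by
    apply antitoneOn_of_deriv_nonpos (convex_Icc 0 s)
    · exact fun x hx => (hder x hx).continuousAt.continuousWithinAt
    · intro x hx
      rw [interior_Icc] at hx
      exact ((hder x (Set.mem_Icc_of_Ioo hx)).differentiableAt).differentiableWithinAt
    · intro x hx
      rw [interior_Icc] at hx
      rw [(hder x (Set.mem_Icc_of_Ioo hx)).deriv]
      -- show G x ≤ 0
      have hx0 : 0 ≤ x := le_of_lt hx.1
      have hxlt : x < 1 := lt_trans hx.2 h1
      have h1x : (0:ℝ) < 1 - x := by linarith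
      have hw : (0:ℝ) < (1-x) ^ (α-1) := Real.rpow_pos_of_pos h1x _
      have hsplit : (1-x) ^ α = (1-x) ^ (α-1) * (1-x) := by
        rw [← Real.rpow_add_one h1x.ne' (α-1)]; ring_nf
      have hDle : D x ≤ x * D x + α * P x := by
        have hsum : x * D x + α * P x
            = ∑ m ∈ range (n+1), ((m:ℝ) + α) * binc α m * x ^ m := by
          rw [hP, hD, Finset.mul_sum, Finset.mul_sum, ← Finset.sum_add_distrib]
          refine Finset.sum_congr rfl fun m _ => ?_
          rcases m with _ | j
          · simp
          · simp only [Nat.add_sub_cancel, Nat.cast_succ]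
            push_cast
            ring
        have hDval : D x = ∑ m ∈ range n, ((m:ℝ) + α) * binc α m * x ^ m := by
          show ∑ m ∈ range (n+1), binc α m * ((m:ℝ) * x ^ (m-1)) = _
          rw [Finset.sum_range_succ' (fun m => binc α m * ((m:ℝ) * x ^ (m-1))) n]
          simp only [Nat.cast_zero, zero_mul, mul_zero, add_zero, Nat.add_sub_cancel]
          refine Finset.sum_congr rfl fun m _ => ?_
          push_cast
          linear_combination x ^ m * (binc_succ hα m)
        rw [hsum, hDval]
        apply Finset.sum_le_sum_of_subset_of_nonneg
        · exact Finset.range_subset_range.2 (Nat.le_succ n)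
        · intro m _ _
          have := binc_nonneg hα m
          positivity
      show (-1) * α * (1-x)^(α-1) * P x + (1-x)^α * D x ≤ 0
      have heq : (-1) * α * (1-x)^(α-1) * P x + (1-x)^α * D x
          = (1-x)^(α-1) * (((1-x) * D x) - α * P x) := by
        rw [hsplit]; ring
      rw [heq]
      apply mul_nonpos_of_nonneg_of_nonpos (le_of_lt hw)
      nlinarith [hDle]
  have hg0 : g 0 = 1 := by
    have : P 0 = 1 := by
      show ∑ m ∈ range (n+1), binc α m * (0:ℝ) ^ m = 1
      rw [Finset.sum_eq_single_of_mem 0 (Finset.mem_range.2 (Nat.succ_pos n))]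
      · simp [binc_zero hα]
      · intro m _ hm
        simp [zero_pow hm]
    simp [hg, this, Real.one_rpow]
  have := hmono (Set.left_mem_Icc.2 h0) (Set.right_mem_Icc.2 h0) h0
  rw [hg0] at this
  exact this

lemma gamma_sum_le {β : ℝ} (hβ : 0 < β) (K : ℕ) {s : ℝ} (h0 : 0 ≤ s) (h1 : s < 1) :
    ∑ m ∈ range K, Real.Gamma ((m:ℝ)+β)/(m.factorial:ℝ) * s^m
      ≤ Real.Gamma β * (1-s)^(-β) := by
  have h1s : (0:ℝ) < 1 - s := by linarith
  have hb := binom_partial_le hβ K h0 h1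
  have hΓ : 0 < Real.Gamma β := Real.Gamma_pos_of_pos hβ
  have hpow : (0:ℝ) < (1-s)^β := Real.rpow_pos_of_pos h1s β
  have key : ∑ m ∈ range K, binc β m * s^m ≤ (1-s)^(-β) := by
    rw [Real.rpow_neg h1s.le]
    calc ∑ m ∈ range K, binc β m * s^m
        = ((1-s)^β)⁻¹ * ((1-s)^β * ∑ m ∈ range K, binc β m * s^m) := by
          field_simp
      _ ≤ ((1-s)^β)⁻¹ * 1 := by
          exact mul_le_mul_of_nonneg_left hb (inv_nonneg.2 hpow.le)
      _ = ((1-s)^β)⁻¹ := mul_one _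
  calc ∑ m ∈ range K, Real.Gamma ((m:ℝ)+β)/(m.factorial:ℝ) * s^m
      = Real.Gamma β * ∑ m ∈ range K, binc β m * s^m := by
        rw [Finset.mul_sum]
        refine Finset.sum_congr rfl fun m _ => ?_
        have hf : ((m.factorial : ℝ)) ≠ 0 := by exact_mod_cast m.factorial_pos.ne'
        unfold binc
        field_simp
    _ ≤ Real.Gamma β * (1-s)^(-β) := mul_le_mul_of_nonneg_left key hΓ.le

/-- Real Laguerre polynomial at a real (typically nonnegative) argument `x`,
normalized so that `LagR μ j x = L_j^μ(-x)` has nonnegative coefficients. -/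
noncomputable def LagR (μ : ℝ) (j : ℕ) (x : ℝ) : ℝ :=
  ∑ i ∈ range (j+1),
    Real.Gamma ((j:ℝ) + μ + 1) / (((j-i).factorial : ℝ) * Real.Gamma (μ + (i:ℝ) + 1))
      * x ^ i / (i.factorial : ℝ)

lemma LagR_nonneg {μ : ℝ} (hμ : 0 < μ) (j : ℕ) {x : ℝ} (hx : 0 ≤ x) :
    0 ≤ LagR μ j x := by
  apply Finset.sum_nonneg
  intro i _
  have h1 : 0 < Real.Gamma ((j:ℝ) + μ + 1) := Real.Gamma_pos_of_pos (by positivity)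
  have h2 : 0 < Real.Gamma (μ + (i:ℝ) + 1) := Real.Gamma_pos_of_pos (by positivity)
  have h3 : (0:ℝ) < (j-i).factorial := by exact_mod_cast (j-i).factorial_pos
  have h4 : (0:ℝ) < i.factorial := by exact_mod_cast i.factorial_pos
  positivity

lemma lag_sum_le {μ : ℝ} (hμ : 0 < μ) (M : ℕ) {s y : ℝ}
    (h0 : 0 ≤ s) (h1 : s < 1) (hy : 0 ≤ y) :
    ∑ j ∈ range M, s ^ j * LagR μ j y
      ≤ (1-s) ^ (-(μ+1)) * Real.exp (s*y/(1-s)) := by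
  have h1s : (0:ℝ) < 1 - s := by linarith
  set f : ℕ → ℕ → ℝ := fun j i =>
    s ^ j * (Real.Gamma ((j:ℝ) + μ + 1) / (((j-i).factorial : ℝ) * Real.Gamma (μ + (i:ℝ) + 1))
      * y ^ i / (i.factorial : ℝ)) with hf
  calc ∑ j ∈ range M, s ^ j * LagR μ j y
      = ∑ j ∈ range M, ∑ i ∈ range (j+1), f j i := by
        refine Finset.sum_congr rfl fun j _ => ?_
        rw [LagR, Finset.mul_sum]
    _ = ∑ i ∈ range M, ∑ j ∈ Ico i M, f j i := by
        refine Finset.sum_comm' ?_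
        intro j i
        simp only [Finset.mem_range, Finset.mem_Ico]
        omega
    _ = ∑ i ∈ range M, ∑ m ∈ range (M-i), f (i+m) i := by
        refine Finset.sum_congr rfl fun i _ => ?_
        exact Finset.sum_Ico_eq_sum_range _ i M
    _ ≤ ∑ i ∈ range M, (1-s)^(-(μ+1)) * ((s*y/(1-s))^i / (i.factorial:ℝ)) := by
        refine Finset.sum_le_sum fun i _ => ?_
        have hβ : 0 < μ + (i:ℝ) + 1 := by positivity
        have hΓβ : 0 < Real.Gamma (μ + (i:ℝ) + 1) := Real.Gamma_pos_of_pos hβ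
        have hfac : (0:ℝ) < i.factorial := by exact_mod_cast i.factorial_pos
        have hrw : ∀ m ∈ range (M-i), f (i+m) i
            = (s^i*y^i/((i.factorial:ℝ) * Real.Gamma (μ + (i:ℝ) + 1)))
              * (Real.Gamma ((m:ℝ)+(μ + (i:ℝ) + 1))/(m.factorial:ℝ) * s^m) := by
          intro m _
          rw [hf]
          simp only [Nat.add_sub_cancel_left]
          rw [show ((i+m : ℕ):ℝ) + μ + 1 = (m:ℝ) + (μ + (i:ℝ) + 1) by push_cast; ring]
          rw [pow_add]
          field_simp
        rw [Finset.sum_congr rfl hrw, ← Finset.mul_sum]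
        have hsum := gamma_sum_le hβ (M-i) h0 h1
        have hnn : (0:ℝ) ≤ s^i*y^i/((i.factorial:ℝ) * Real.Gamma (μ + (i:ℝ) + 1)) := by
          positivity
        calc (s^i*y^i/((i.factorial:ℝ) * Real.Gamma (μ + (i:ℝ) + 1)))
              * ∑ m ∈ range (M-i), Real.Gamma ((m:ℝ)+(μ + (i:ℝ) + 1))/(m.factorial:ℝ) * s^m
            ≤ (s^i*y^i/((i.factorial:ℝ) * Real.Gamma (μ + (i:ℝ) + 1)))
              * (Real.Gamma (μ + (i:ℝ) + 1) * (1-s)^(-(μ + (i:ℝ) + 1))) :=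
              mul_le_mul_of_nonneg_left hsum hnn
          _ = (1-s)^(-(μ+1)) * ((s*y/(1-s))^i / (i.factorial:ℝ)) := by
              rw [show -(μ + (i:ℝ) + 1) = -(μ+1) + (-(i:ℝ)) by ring,
                Real.rpow_add h1s, Real.rpow_neg h1s.le ((i:ℝ)), Real.rpow_natCast,
                div_pow, mul_pow]
              field_simp
    _ = (1-s)^(-(μ+1)) * ∑ i ∈ range M, (s*y/(1-s))^i / (i.factorial:ℝ) := by
        rw [Finset.mul_sum]
    _ ≤ (1-s)^(-(μ+1)) * Real.exp (s*y/(1-s)) := by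
        have harg : 0 ≤ s*y/(1-s) := by positivity
        exact mul_le_mul_of_nonneg_left (Real.sum_le_exp_of_nonneg harg M)
          (Real.rpow_nonneg h1s.le _)

/-- Generalized Laguerre polynomial `L_j^ν(z)`. -/
noncomputable def Lag (ν : ℝ) (j : ℕ) (z : ℂ) : ℂ :=
  ∑ k ∈ range (j + 1),
    ((Real.Gamma ((j : ℝ) + ν + 1) /
        (((j - k).factorial : ℝ) * Real.Gamma (ν + (k : ℝ) + 1)) : ℝ) : ℂ) *
      (-z) ^ k / ((k.factorial : ℕ) : ℂ)

lemma Lag_neg_real (μ : ℝ) (j : ℕ) (x : ℝ) :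
    Lag μ j ((-x : ℝ) : ℂ) = ((LagR μ j x : ℝ) : ℂ) := by
  rw [Lag, LagR]
  push_cast
  refine Finset.sum_congr rfl fun i _ => ?_
  ring

lemma abs_Lag_le {μ : ℝ} (hμ : 0 < μ) (j : ℕ) (w : ℂ) :
    ‖Lag μ j w‖ ≤ LagR μ j ‖w‖ := by
  rw [Lag, LagR]
  refine le_trans (norm_sum_le _ _) (Finset.sum_le_sum fun i _ => ?_)
  have h1 : 0 < Real.Gamma ((j:ℝ) + μ + 1) := Real.Gamma_pos_of_pos (by positivity)
  have h2 : 0 < Real.Gamma (μ + (i:ℝ) + 1) := Real.Gamma_pos_of_pos (by positivity)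
  have h3 : (0:ℝ) < (j-i).factorial := by exact_mod_cast (j-i).factorial_pos
  have hc : (0:ℝ) ≤ Real.Gamma ((j:ℝ) + μ + 1) / (((j-i).factorial : ℝ) * Real.Gamma (μ + (i:ℝ) + 1)) := by
    positivity
  apply le_of_eq
  rw [norm_div, norm_mul, norm_pow, norm_neg, Complex.norm_real, Real.norm_eq_abs, Complex.norm_natCast,
    abs_of_nonneg hc]

/-- The partial sum `𝓘_k(z) = (1−τ²)^{ν+2k+1}·e^{τ√ν·z}·∑_{j=0}^{N−1−k} τ^{2j}·L_j^{ν+2k}(a·z)`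
with `a = (1−τ²)√ν/τ`. -/
noncomputable def Ical (N : ℕ) (ν τ : ℝ) (k : ℕ) (z : ℂ) : ℂ :=
  (((1 - τ ^ 2) ^ (ν + 2 * k + 1) : ℝ) : ℂ) *
    Complex.exp (((τ * Real.sqrt ν : ℝ) : ℂ) * z) *
    ∑ j ∈ range (N - k),
      ((τ ^ (2 * j) : ℝ) : ℂ) * Lag (ν + 2 * k) j ((((1 - τ ^ 2) * Real.sqrt ν / τ : ℝ) : ℂ) * z)

/-- Uniform bound for `𝓘_k`: `|𝓘_k(z)| ≤ e^{τ√ν(|z|+Re z)}·𝓘_k(−|z|)` and `𝓘_k(−|z|) ≤ 1`,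
so in particular `|𝓘_k(z)| ≤ e^{τ√ν(|z|+Re z)}`. -/
theorem Ical_uniform_bound (N : ℕ) (hN : 1 ≤ N) (ν : ℝ) (hν : 0 < ν)
    (τ : ℝ) (hτ : τ ∈ Set.Ioo (0 : ℝ) 1) (k : ℕ) (hk : k ≤ N - 1) (z : ℂ) :
    ‖Ical N ν τ k z‖
        ≤ Real.exp (τ * Real.sqrt ν * (‖z‖ + z.re)) *
            (Ical N ν τ k ((-(‖z‖) : ℝ) : ℂ)).re ∧
      (Ical N ν τ k ((-(‖z‖) : ℝ) : ℂ)).re ≤ 1 ∧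
      ‖Ical N ν τ k z‖ ≤ Real.exp (τ * Real.sqrt ν * (‖z‖ + z.re)) := by
  obtain ⟨hτ0, hτ1⟩ := hτ
  set t : ℝ := ‖z‖ with ht
  have ht0 : 0 ≤ t := norm_nonneg z
  set μ : ℝ := ν + 2 * (k:ℝ) with hμdef
  have hμ : 0 < μ := by positivity
  have hs0 : (0:ℝ) ≤ τ^2 := sq_nonneg τ
  have hs1 : τ^2 < 1 := by nlinarith
  have h1s : (0:ℝ) < 1 - τ^2 := by linarith
  have hsq : 0 < Real.sqrt ν := Real.sqrt_pos.2 hν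
  set a : ℝ := (1 - τ^2) * Real.sqrt ν / τ with ha
  have ha0 : 0 ≤ a := by positivity
  set S : ℝ := ∑ j ∈ range (N - k), τ^(2*j) * LagR μ j (a*t) with hS
  set R : ℝ := (1-τ^2)^(μ+1) * Real.exp (-(τ*Real.sqrt ν*t)) * S with hR
  -- Ical at -t is the real number R
  have hIcalneg : Ical N ν τ k ((-t : ℝ) : ℂ) = ((R:ℝ):ℂ) := by
    rw [Ical, hR, hS]
    have e1 : ∀ j ∈ range (N-k), ((τ^(2*j) : ℝ):ℂ) * Lag (ν + 2*(k:ℕ)) j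
        (((a : ℝ) : ℂ) * ((-t:ℝ):ℂ))
        = ((τ^(2*j) * LagR μ j (a*t) : ℝ) : ℂ) := by
      intro j _
      rw [show ((a:ℝ):ℂ) * ((-t:ℝ):ℂ) = ((-(a*t) : ℝ):ℂ) by push_cast; ring,
        Lag_neg_real]
      push_cast
      ring
    rw [Finset.sum_congr rfl e1]
    rw [show (((τ * Real.sqrt ν : ℝ) : ℂ) * ((-t:ℝ):ℂ)) = ((-(τ*Real.sqrt ν*t) : ℝ) : ℂ) by
      push_cast; ring]
    rw [← Complex.ofReal_exp]
    push_cast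
    ring
  have hre : (Ical N ν τ k ((-t : ℝ) : ℂ)).re = R := by
    rw [hIcalneg, Complex.ofReal_re]
  -- the key bound S ≤ (1-τ²)^{-(μ+1)} e^{τ√ν t}
  have hSle : S ≤ (1-τ^2) ^ (-(μ+1)) * Real.exp (τ*Real.sqrt ν*t) := by
    have h := lag_sum_le hμ (N-k) hs0 hs1 (mul_nonneg ha0 ht0)
    have harg : τ^2*(a*t)/(1-τ^2) = τ*Real.sqrt ν*t := by
      rw [ha]; field_simp
    rw [harg] at h
    refine le_trans (le_of_eq ?_) h
    refine Finset.sum_congr rfl fun j _ => ?_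
    rw [pow_mul]
  have hRnonneg : 0 ≤ S := by
    refine Finset.sum_nonneg fun j _ => ?_
    exact mul_nonneg (by positivity) (LagR_nonneg hμ j (mul_nonneg ha0 ht0))
  have hRle : R ≤ 1 := by
    rw [hR]
    calc (1-τ^2)^(μ+1) * Real.exp (-(τ*Real.sqrt ν*t)) * S
        ≤ (1-τ^2)^(μ+1) * Real.exp (-(τ*Real.sqrt ν*t)) *
            ((1-τ^2) ^ (-(μ+1)) * Real.exp (τ*Real.sqrt ν*t)) := by
          refine mul_le_mul_of_nonneg_left hSle ?_
          positivity
      _ = 1 := by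
          have hrp : (1-τ^2)^(μ+1) * (1-τ^2)^(-(μ+1)) = 1 := by
            rw [← Real.rpow_add h1s, show μ + 1 + -(μ + 1) = (0:ℝ) by ring, Real.rpow_zero]
          rw [show (1-τ^2)^(μ+1) * Real.exp (-(τ*Real.sqrt ν*t)) *
              ((1-τ^2) ^ (-(μ+1)) * Real.exp (τ*Real.sqrt ν*t))
              = ((1-τ^2)^(μ+1) * (1-τ^2)^(-(μ+1))) *
                (Real.exp (-(τ*Real.sqrt ν*t)) * Real.exp (τ*Real.sqrt ν*t)) by ring,
            hrp, ← Real.exp_add]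
          simp
  -- bound on |Ical z|
  have habs : ‖Ical N ν τ k z‖
      ≤ (1-τ^2)^(μ+1) * Real.exp (τ*Real.sqrt ν*z.re) * S := by
    rw [Ical, norm_mul, norm_mul]
    have e1 : ‖(((1 - τ ^ 2) ^ (ν + 2 * (k:ℕ) + 1) : ℝ) : ℂ)‖ = (1-τ^2)^(μ+1) := by
      rw [Complex.norm_real, Real.norm_eq_abs, abs_of_nonneg (Real.rpow_nonneg h1s.le _)]
    have e2 : ‖Complex.exp (((τ * Real.sqrt ν : ℝ) : ℂ) * z)‖
        = Real.exp (τ*Real.sqrt ν*z.re) := by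
      rw [Complex.norm_exp]
      congr 1
      simp [Complex.mul_re]
    rw [e1, e2]
    refine mul_le_mul_of_nonneg_left ?_ (by positivity)
    refine le_trans (norm_sum_le _ _) ?_
    refine Finset.sum_le_sum fun j _ => ?_
    rw [norm_mul, Complex.norm_real, Real.norm_eq_abs, abs_of_nonneg (pow_nonneg hτ0.le _)]
    refine mul_le_mul_of_nonneg_left ?_ (pow_nonneg hτ0.le _)
    refine le_trans (abs_Lag_le hμ j _) (le_of_eq ?_)
    rw [norm_mul, Complex.norm_real, Real.norm_eq_abs, abs_of_nonneg ha0, ← ht]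
  have hmain : ‖Ical N ν τ k z‖
      ≤ Real.exp (τ * Real.sqrt ν * (t + z.re)) * R := by
    refine le_trans habs (le_of_eq ?_)
    rw [hR]
    rw [show Real.exp (τ * Real.sqrt ν * (t + z.re)) *
        ((1-τ^2)^(μ+1) * Real.exp (-(τ*Real.sqrt ν*t)) * S)
        = (1-τ^2)^(μ+1) * (Real.exp (τ * Real.sqrt ν * (t + z.re)) *
            Real.exp (-(τ*Real.sqrt ν*t))) * S by ring]
    rw [← Real.exp_add]
    ring_nf
  refine ⟨by rw [hre]; exact hmain, by rw [hre]; exact hRle, ?_⟩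
  calc ‖Ical N ν τ k z‖ ≤ Real.exp (τ * Real.sqrt ν * (t + z.re)) * R := hmain
    _ ≤ Real.exp (τ * Real.sqrt ν * (t + z.re)) * 1 :=
        mul_le_mul_of_nonneg_left hRle (Real.exp_nonneg _)
    _ = _ := mul_one _
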